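/- Let X be a finite indecomposable quandle whose finite enveloping group Ḡ_X is finite, and let M = max{|𝒪| : 𝒪 is a conjugacy class of Ḡ_X}. Then every conjugacy class of the enveloping group G_X has at most M elements. -/

import Mathlib

open Quandles

/-- The inner group of a rack: the subgroup of permutations generated by the
translations `φᵢ = (i ◃ ·)`. -/
def quandleInn (X : Type) [Rack X] : Subgroup (Equiv.Perm X) :=
  Subgroup.closure (Set.range (fun i : X => Rack.act' i))

/-- A quandle is indecomposable if its inner group acts transitively. -/
def QuandleIndecomposable (X : Type) [Rack X] : Prop :=
  ∀ x y : X, ∃ f ∈ quandleInn X, f x = y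

/-- The kernel of the projection from the enveloping group of a quandle to its finite
enveloping group: the normal closure of the set of elements `x_i ^ |φᵢ|`. -/
def envelKer (X : Type) [Quandle X] : Subgroup (Rack.EnvelGroup X) :=
  Subgroup.normalClosure
    {w | ∃ i : X, w = (Rack.toEnvelGroup X i : Rack.EnvelGroup X) ^ orderOf (Rack.act' i)}

instance (X : Type) [Quandle X] : (envelKer X).Normal :=
  Subgroup.normalClosure_normal

section Aux
variable (X : Type) [Quandle X]

/-- abbreviation for x_i -/
private def ee (i : X) : Rack.EnvelGroup X := Rack.toEnvelGroup X i

private lemma ee_conj (i j : X) : ee X (i ◃ j) = ee X i * ee X j * (ee X i)⁻¹ := by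
  have := (Rack.toEnvelGroup X).map_act (x := i) (y := j)
  simpa [ee, Quandle.conj_act_eq_conj] using this

private lemma ee_pow_conj (n : ℕ) (i j : X) :
    ee X i ^ n * ee X j * (ee X i ^ n)⁻¹ = ee X ((Rack.act' i ^ n) j) := by
  induction n with
  | zero => simp
  | succ n ih =>
      rw [pow_succ' (ee X i), pow_succ' (Rack.act' i)]
      have : (Rack.act' i * Rack.act' i ^ n) j = i ◃ ((Rack.act' i ^ n) j) := rfl
      rw [this, ee_conj]
      rw [← ih]
      group

/-- the central element z_i = x_i ^ N_i -/
private noncomputable def zz (i : X) : Rack.EnvelGroup X := ee X i ^ orderOf (Rack.act' i)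

private lemma zz_comm_ee (i j : X) : zz X i * ee X j * (zz X i)⁻¹ = ee X j := by
  rw [zz, ee_pow_conj, pow_orderOf_eq_one]
  rfl

private lemma zz_commute (i : X) (g : Rack.EnvelGroup X) : Commute (zz X i) g := by
  have base : ∀ j : X, Commute (zz X i) (ee X j) := by
    intro j
    have := zz_comm_ee X i j
    rw [Commute, SemiconjBy]
    rw [mul_inv_eq_iff_eq_mul] at this
    rw [this]
  induction g using Quotient.inductionOn with
  | h a =>
    induction a with
    | unit => exact Commute.one_right _
    | incl x => exact base x
    | mul a b ha hb => exact ha.mul_right hb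
    | inv a ha => exact ha.inv_right

private lemma orderOf_act_conj (i j : X) :
    orderOf (Rack.act' (i ◃ j)) = orderOf (Rack.act' j) := by
  have h := Rack.ad_conj i j
  have : SemiconjBy (Rack.act' i) (Rack.act' j) (Rack.act' (i ◃ j)) := by
    rw [SemiconjBy, h]; group
  exact (this.orderOf_eq _).symm

private lemma zz_inn (f : Equiv.Perm X) (hf : f ∈ quandleInn X) (i : X) :
    zz X (f i) = zz X i := by
  revert i
  induction hf using Subgroup.closure_induction with
  | mem x hx =>
      obtain ⟨k, rfl⟩ := hx
      intro i
      show zz X (k ◃ i) = zz X i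
      rw [zz, zz, orderOf_act_conj]
      have h1 : ee X (k ◃ i) = ee X k * ee X i * (ee X k)⁻¹ := ee_conj X k i
      rw [h1, conj_pow]
      have := (zz_commute X i (ee X k)).symm
      rw [Commute, SemiconjBy] at this
      rw [zz] at this
      rw [mul_inv_eq_iff_eq_mul, this]
  | one => intro i; rfl
  | mul x y hx hy ihx ihy => intro i; rw [Equiv.Perm.mul_apply, ihx, ihy]
  | inv x hx ih =>
      intro i
      have := ih (x⁻¹ i)
      rw [show x (x⁻¹ i) = i from x.apply_symm_apply i] at this
      exact this.symm




theorem stmt13 (X : Type) [Quandle X] [Finite X] (hind : QuandleIndecomposable X)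
    (hfin : Finite (Rack.EnvelGroup X ⧸ envelKer X)) (M : ℕ)
    (hM : IsGreatest
      {k : ℕ | ∃ w : Rack.EnvelGroup X ⧸ envelKer X,
        k = Set.ncard {v : Rack.EnvelGroup X ⧸ envelKer X | IsConj w v}} M) :
    ∀ u : Rack.EnvelGroup X,
      {v : Rack.EnvelGroup X | IsConj u v}.Finite ∧
      Set.ncard {v : Rack.EnvelGroup X | IsConj u v} ≤ M := by
  classical
  intro u
  set π : Rack.EnvelGroup X →* Rack.EnvelGroup X ⧸ envelKer X :=
    QuotientGroup.mk' (envelKer X) with hπ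
  -- deg homomorphism
  obtain ⟨D, hD⟩ : ∃ D : Rack.EnvelGroup X →* Multiplicative ℤ, ∀ j : X, D (ee X j) = Multiplicative.ofAdd 1 := by
    classical
    refine ⟨Rack.toEnvelGroup.map ⟨fun _ => Multiplicative.ofAdd 1, ?_⟩, fun j => rfl⟩
    intro x y
    show Multiplicative.ofAdd 1 = Shelf.act _ _
    rw [Quandle.conj_act_eq_conj]; group
  -- key: elements of envelKer of degree 0 are trivial
  have key : ∀ k ∈ envelKer X, D k = 1 → k = 1 := by
    cases isEmpty_or_nonempty X with
    | inl hempty =>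
        intro k hk _
        have : envelKer X ≤ ⊥ := by
          apply Subgroup.normalClosure_le_normal
          rintro w ⟨i, -⟩
          exact (hempty.false i).elim
        simpa using this hk
    | inr hne =>
        obtain ⟨i₀⟩ := hne
        set z := zz X i₀
        have hzc : ∀ g : Rack.EnvelGroup X, Commute z g := zz_commute X i₀
        have hnormal : (Subgroup.zpowers z).Normal := by
          constructor
          intro n hn g
          obtain ⟨m, rfl⟩ := hn
          show g * z ^ m * g⁻¹ ∈ _
          rw [((hzc g).symm.zpow_right m).eq]
          simpa using Subgroup.zpow_mem _ (Subgroup.mem_zpowers z) m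
        have hle : envelKer X ≤ Subgroup.zpowers z := by
          apply Subgroup.normalClosure_le_normal
          rintro w ⟨i, rfl⟩
          obtain ⟨f, hf, hfe⟩ := hind i₀ i
          have : zz X i = z := by rw [← hfe, zz_inn X f hf]
          rw [show (Rack.toEnvelGroup X i : Rack.EnvelGroup X) ^ orderOf (Rack.act' i) = zz X i from rfl, this]
          exact Subgroup.mem_zpowers z
        intro k hk hDk
        obtain ⟨m, rfl⟩ := hle hk
        have hDz : D z = Multiplicative.ofAdd (orderOf (Rack.act' i₀) : ℤ) := by
          rw [show z = ee X i₀ ^ orderOf (Rack.act' i₀) from rfl, map_pow, hD]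
          rw [← ofAdd_nsmul]
          norm_num
        rw [map_zpow, hDz, ← ofAdd_zsmul] at hDk
        have hN : 0 < orderOf (Rack.act' i₀) := orderOf_pos _
        have : m • (orderOf (Rack.act' i₀) : ℤ) = 0 := congrArg Multiplicative.toAdd hDk
        have hm : m = 0 := by
          have hil : (orderOf (Rack.act' i₀) : ℤ) ≠ 0 := by exact_mod_cast hN.ne'
          rw [smul_eq_mul] at this
          exact (mul_eq_zero.mp this).resolve_right hil
        show z ^ m = 1
        rw [hm, zpow_zero]
  -- injectivity of π on the conjugacy class of u
  have hinj : Set.InjOn π {v : Rack.EnvelGroup X | IsConj u v} := by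
    intro v hv v' hv' hvv'
    have hker : v⁻¹ * v' ∈ envelKer X := by
      rw [← QuotientGroup.ker_mk' (envelKer X), MonoidHom.mem_ker, map_mul, map_inv,
        inv_mul_eq_one, hvv']
    have hd : D (v⁻¹ * v') = 1 := by
      obtain ⟨g, hg⟩ := hv
      obtain ⟨g', hg'⟩ := hv'
      have e1 : D ↑g * D u = D v * D ↑g := by rw [← map_mul, ← map_mul, hg.eq]
      have h1 : D v = D u := by
        rw [mul_comm (D v)] at e1
        exact (mul_left_cancel e1).symm
      have e2 : D ↑g' * D u = D v' * D ↑g' := by rw [← map_mul, ← map_mul, hg'.eq]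
      have h2 : D v' = D u := by
        rw [mul_comm (D v')] at e2
        exact (mul_left_cancel e2).symm
      rw [map_mul, map_inv, h1, h2]
      group
    have := key _ hker hd
    rw [inv_mul_eq_one] at this
    exact this
  -- conclude
  have hmap : ∀ v ∈ {v : Rack.EnvelGroup X | IsConj u v}, π v ∈ {v' : Rack.EnvelGroup X ⧸ envelKer X | IsConj (π u) v'} :=
    fun v hv => π.map_isConj hv
  have htfin : {v' : Rack.EnvelGroup X ⧸ envelKer X | IsConj (π u) v'}.Finite := Set.toFinite _
  have himfin : (π '' {v : Rack.EnvelGroup X | IsConj u v}).Finite := Set.toFinite _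
  have hsfin : {v : Rack.EnvelGroup X | IsConj u v}.Finite := Set.Finite.of_finite_image himfin hinj
  refine ⟨hsfin, ?_⟩
  have h1 : Set.ncard {v : Rack.EnvelGroup X | IsConj u v} = (π '' {v : Rack.EnvelGroup X | IsConj u v}).ncard :=
    (Set.ncard_image_of_injOn hinj).symm
  have h2 : (π '' {v : Rack.EnvelGroup X | IsConj u v}).ncard
      ≤ Set.ncard {v' : Rack.EnvelGroup X ⧸ envelKer X | IsConj (π u) v'} :=
    Set.ncard_le_ncard (by rintro w ⟨v, hv, rfl⟩; exact hmap v hv) htfin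
  have h3 : Set.ncard {v' : Rack.EnvelGroup X ⧸ envelKer X | IsConj (π u) v'} ≤ M :=
    hM.2 ⟨π u, rfl⟩
  omega
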